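/- arXiv:2203.05609 — 11 statements merged into one kernel-verified Lean document; each statement's English description precedes it below -/
import Mathlib

section
/- Let X be an approximate subring of a (not necessarily unital or commutative) ring. Then for every positive integer m, the set m(X^{≤ m}) — consisting of all sums of m elements, each of which is a product of at most m elements of X — is covered by finitely many additive translates of X (i.e. there is a finite set F with m(X^{≤ m}) ⊆ F + X). -/
open Pointwise

/-- A subset of a (not necessarily unital or commutative) ring is additively symmetric
if it contains `0` and `-X = X`. -/
def AddSymmetric {R : Type*} [NonUnitalRing R] (X : Set R) : Prop :=
  (0 : R) ∈ X ∧ -X = X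

/-- `X` is an approximate subring if it is additively symmetric and
`X·X ∪ (X+X) ⊆ F + X` for some finite subset `F` of the subring generated by `X`. -/
def IsApproxSubring {R : Type*} [NonUnitalRing R] (X : Set R) : Prop :=
  AddSymmetric X ∧ ∃ F : Set R, F.Finite ∧ F ⊆ (NonUnitalSubring.closure X : Set R) ∧
    X * X ∪ (X + X) ⊆ F + X

/-- `prodPow X n` is the set of products of `n+1` elements of `X` (so `X^{n+1}`). -/
def prodPow {R : Type*} [NonUnitalRing R] (X : Set R) : ℕ → Set R
  | 0 => X
  | n + 1 => prodPow X n * X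

/-- `prodLe X m = X^{≤ m}`: the set of products of at least one and at most `m` elements of `X`. -/
def prodLe {R : Type*} [NonUnitalRing R] (X : Set R) (m : ℕ) : Set R :=
  ⋃ k < m, prodPow X k

/-- `iterAdd A n` is the set of sums of `n+1` elements of `A`. -/
def iterAdd {R : Type*} [NonUnitalRing R] (A : Set R) : ℕ → Set R
  | 0 => A
  | n + 1 => iterAdd A n + A

section aux

variable {R : Type*} [NonUnitalRing R] (X : Set R)

/-- `A` is covered by `F`-translates of `X`, with `F` finite and inside the closure. -/
def GoodCov (A : Set R) : Prop :=
  ∃ F : Set R, F.Finite ∧ F ⊆ (NonUnitalSubring.closure X : Set R) ∧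
    ∀ a ∈ A, ∃ f ∈ F, ∃ x ∈ X, a = f + x

variable {X}
variable (h0 : (0 : R) ∈ X) (hneg : -X = X)
  {F0 : Set R} (hF0fin : F0.Finite) (hF0cl : F0 ⊆ (NonUnitalSubring.closure X : Set R))
  (hmul : ∀ x ∈ X, ∀ y ∈ X, ∃ f ∈ F0, ∃ z ∈ X, x * y = f + z)
  (hadd : ∀ x ∈ X, ∀ y ∈ X, ∃ f ∈ F0, ∃ z ∈ X, x + y = f + z)

include hF0fin hF0cl hadd in
lemma goodCov_add {A B : Set R} (hA : GoodCov X A) (hB : GoodCov X B) :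
    GoodCov X (A + B) := by
  obtain ⟨F, hFfin, hFcl, hF⟩ := hA
  obtain ⟨G, hGfin, hGcl, hG⟩ := hB
  refine ⟨F + G + F0, (hFfin.add hGfin).add hF0fin, ?_, ?_⟩
  · rintro _ ⟨_, ⟨f, hf, g, hg, rfl⟩, f0, hf0, rfl⟩
    exact add_mem (add_mem (hFcl hf) (hGcl hg)) (hF0cl hf0)
  · rintro c ⟨a, ha, b, hb, rfl⟩
    obtain ⟨f, hf, x, hx, rfl⟩ := hF a ha
    obtain ⟨g, hg, y, hy, rfl⟩ := hG b hb
    obtain ⟨f0, hf0, z, hz, hxy⟩ := hadd x hx y hy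
    refine ⟨f + g + f0, ⟨f + g, ⟨f, hf, g, hg, rfl⟩, f0, hf0, rfl⟩, z, hz, ?_⟩
    show f + x + (g + y) = f + g + f0 + z
    have : f + x + (g + y) = f + g + (x + y) := by abel
    rw [this, hxy]; abel

include h0 hneg hF0fin hF0cl hmul hadd in
lemma goodCov_elem_mul :
    ∀ g ∈ NonUnitalSubring.closure X, GoodCov X ((fun x => g * x) '' X) := by
  intro g hg
  induction hg using NonUnitalSubring.closure_induction with
  | mem x hx =>
    refine ⟨F0, hF0fin, hF0cl, ?_⟩
    rintro _ ⟨y, hy, rfl⟩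
    exact hmul x hx y hy
  | zero =>
    refine ⟨{0}, Set.finite_singleton 0, Set.singleton_subset_iff.2 (zero_mem _), ?_⟩
    rintro _ ⟨y, hy, rfl⟩
    exact ⟨0, rfl, 0, h0, by simp⟩
  | add a b ha hb iha ihb =>
    obtain ⟨F, hFfin, hFcl, hF⟩ := iha
    obtain ⟨G, hGfin, hGcl, hG⟩ := ihb
    refine ⟨F + G + F0, (hFfin.add hGfin).add hF0fin, ?_, ?_⟩
    · rintro _ ⟨_, ⟨f, hf, g', hg', rfl⟩, f0, hf0, rfl⟩
      exact add_mem (add_mem (hFcl hf) (hGcl hg')) (hF0cl hf0)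
    · rintro _ ⟨y, hy, rfl⟩
      obtain ⟨f, hf, x, hx, hfx⟩ := hF (a * y) ⟨y, hy, rfl⟩
      obtain ⟨g', hg', x', hx', hgx⟩ := hG (b * y) ⟨y, hy, rfl⟩
      obtain ⟨f0, hf0, z, hz, hxy⟩ := hadd x hx x' hx'
      refine ⟨f + g' + f0, ⟨f + g', ⟨f, hf, g', hg', rfl⟩, f0, hf0, rfl⟩, z, hz, ?_⟩
      show (a + b) * y = f + g' + f0 + z
      have : (a + b) * y = f + x + (g' + x') := by rw [add_mul, hfx, hgx]
      rw [this]
      have : f + x + (g' + x') = f + g' + (x + x') := by abel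
      rw [this, hxy]; abel
  | neg a ha iha =>
    obtain ⟨F, hFfin, hFcl, hF⟩ := iha
    refine ⟨-F, hFfin.neg, ?_, ?_⟩
    · intro f hf
      rw [Set.mem_neg] at hf
      simpa using neg_mem (hFcl hf)
    · rintro _ ⟨y, hy, rfl⟩
      obtain ⟨f, hf, x, hx, hfx⟩ := hF (a * y) ⟨y, hy, rfl⟩
      refine ⟨-f, Set.neg_mem_neg.2 hf, -x, ?_, ?_⟩
      · rw [← hneg]; exact Set.neg_mem_neg.2 hx
      · show -a * y = -f + -x
        rw [neg_mul, hfx]; abel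
  | mul a b ha hb iha ihb =>
    obtain ⟨F, hFfin, hFcl, hF⟩ := iha
    obtain ⟨G, hGfin, hGcl, hG⟩ := ihb
    refine ⟨(fun f => a * f) '' G + F, ((hGfin.image _).add hFfin), ?_, ?_⟩
    · rintro _ ⟨_, ⟨g', hg', rfl⟩, f, hf, rfl⟩
      exact add_mem (mul_mem ha (hGcl hg')) (hFcl hf)
    · rintro _ ⟨y, hy, rfl⟩
      obtain ⟨g', hg', x, hx, hgx⟩ := hG (b * y) ⟨y, hy, rfl⟩
      obtain ⟨f, hf, x', hx', hfx⟩ := hF (a * x) ⟨x, hx, rfl⟩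
      refine ⟨a * g' + f, ⟨a * g', ⟨g', hg', rfl⟩, f, hf, rfl⟩, x', hx', ?_⟩
      show a * b * y = a * g' + f + x'
      have : a * b * y = a * (b * y) := mul_assoc a b y
      rw [this, hgx, mul_add, hfx]; abel

include h0 hneg hF0fin hF0cl hmul hadd in
lemma goodCov_finite_mul {G : Set R} (hGfin : G.Finite)
    (hGcl : G ⊆ (NonUnitalSubring.closure X : Set R)) :
    GoodCov X ((fun p : R × R => p.1 * p.2) '' (G ×ˢ X)) := by
  choose Fg hFgfin hFgcl hFg using
    fun (g : G) => goodCov_elem_mul h0 hneg hF0fin hF0cl hmul hadd g (hGcl g.2)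
  haveI : Finite G := hGfin
  refine ⟨⋃ g : G, Fg g, Set.finite_iUnion hFgfin, ?_, ?_⟩
  · exact Set.iUnion_subset fun g => hFgcl g
  · rintro _ ⟨⟨g, y⟩, ⟨hg, hy⟩, rfl⟩
    obtain ⟨f, hf, x, hx, hfx⟩ := hFg ⟨g, hg⟩ (g * y) ⟨y, hy, rfl⟩
    exact ⟨f, Set.mem_iUnion.2 ⟨⟨g, hg⟩, hf⟩, x, hx, hfx⟩

include h0 hneg hF0fin hF0cl hmul hadd in
lemma goodCov_prodPow : ∀ n : ℕ, GoodCov X (prodPow X n) := by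
  intro n
  induction n with
  | zero =>
    exact ⟨{0}, Set.finite_singleton 0, Set.singleton_subset_iff.2 (zero_mem _),
      fun a ha => ⟨0, rfl, a, ha, by simp⟩⟩
  | succ n ih =>
    obtain ⟨F, hFfin, hFcl, hF⟩ := ih
    obtain ⟨G, hGfin, hGcl, hG⟩ :=
      goodCov_finite_mul h0 hneg hF0fin hF0cl hmul hadd hFfin hFcl
    refine ⟨G + F0 + F0, (hGfin.add hF0fin).add hF0fin, ?_, ?_⟩
    · rintro _ ⟨_, ⟨g, hg, f0, hf0, rfl⟩, f0', hf0', rfl⟩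
      exact add_mem (add_mem (hGcl hg) (hF0cl hf0)) (hF0cl hf0')
    · rintro _ ⟨p, hp, y, hy, rfl⟩
      obtain ⟨f, hf, x, hx, rfl⟩ := hF p hp
      obtain ⟨g, hg, x', hx', hfy⟩ := hG (f * y) ⟨⟨f, y⟩, ⟨hf, hy⟩, rfl⟩
      obtain ⟨f0, hf0, z, hz, hxy⟩ := hmul x hx y hy
      obtain ⟨f0', hf0', z', hz', hxz⟩ := hadd x' hx' z hz
      refine ⟨g + f0 + f0', ⟨g + f0, ⟨g, hg, f0, hf0, rfl⟩, f0', hf0', rfl⟩, z', hz', ?_⟩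
      show (f + x) * y = g + f0 + f0' + z'
      have : (f + x) * y = f * y + x * y := add_mul f x y
      rw [this, hfy, hxy]
      have : g + x' + (f0 + z) = g + f0 + (x' + z) := by abel
      rw [this, hxz]; abel

end aux

/-- For an approximate subring `X` and `m ≥ 1`, the set `m(X^{≤ m})` of sums of `m`
elements each of which is a product of at most `m` elements of `X` is covered by
finitely many additive translates of `X`. -/
theorem approx_subring_sums_of_bounded_products_covered
    {R : Type*} [NonUnitalRing R] (X : Set R) (hX : IsApproxSubring X)
    (m : ℕ) (hm : 0 < m) :
    ∃ F : Set R, F.Finite ∧ iterAdd (prodLe X m) (m - 1) ⊆ F + X := by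
  obtain ⟨⟨h0, hneg⟩, F0, hF0fin, hF0cl, hcov⟩ := hX
  have hmul : ∀ x ∈ X, ∀ y ∈ X, ∃ f ∈ F0, ∃ z ∈ X, x * y = f + z := by
    intro x hx y hy
    have := hcov (Set.mem_union_left _ ⟨x, hx, y, hy, rfl⟩)
    obtain ⟨f, hf, z, hz, hxy⟩ := this
    exact ⟨f, hf, z, hz, hxy.symm⟩
  have hadd : ∀ x ∈ X, ∀ y ∈ X, ∃ f ∈ F0, ∃ z ∈ X, x + y = f + z := by
    intro x hx y hy
    have := hcov (Set.mem_union_right _ ⟨x, hx, y, hy, rfl⟩)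
    obtain ⟨f, hf, z, hz, hxy⟩ := this
    exact ⟨f, hf, z, hz, hxy.symm⟩
  -- prodLe is covered
  have hP : GoodCov X (prodLe X m) := by
    choose Fk hFkfin hFkcl hFk using
      fun k : ℕ => goodCov_prodPow h0 hneg hF0fin hF0cl hmul hadd k
    refine ⟨⋃ k < m, Fk k, ?_, ?_, ?_⟩
    · exact Set.Finite.biUnion (Set.finite_Iio m) fun k _ => hFkfin k
    · exact Set.iUnion₂_subset fun k _ => hFkcl k
    · intro a ha
      rw [prodLe, Set.mem_iUnion₂] at ha
      obtain ⟨k, hk, hak⟩ := ha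
      obtain ⟨f, hf, x, hx, hfx⟩ := hFk k a hak
      exact ⟨f, Set.mem_iUnion₂.2 ⟨k, hk, hf⟩, x, hx, hfx⟩
  -- iterAdd preserves covered
  have hI : ∀ n : ℕ, GoodCov X (iterAdd (prodLe X m) n) := by
    intro n
    induction n with
    | zero => exact hP
    | succ n ih => exact goodCov_add hF0fin hF0cl hadd ih hP
  obtain ⟨F, hFfin, _, hF⟩ := hI (m - 1)
  refine ⟨F, hFfin, fun a ha => ?_⟩
  obtain ⟨f, hf, x, hx, hfx⟩ := hF a ha
  exact ⟨f, hf, x, hx, hfx.symm⟩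
end

section
/- Let X be an approximate subring of a ring and ⟨X⟩ the subring it generates. Then for every element x of ⟨X⟩, the set x·X := {x·y : y ∈ X} is covered by finitely many additive translates of X. -/
open Pointwise

/-- For an approximate subring `X` and any `x` in the subring generated by `X`,
the set `x·X` is covered by finitely many additive translates of `X`. -/
theorem approx_subring_smul_covered
    {R : Type*} [NonUnitalRing R] (X : Set R) (hX : IsApproxSubring X)
    (x : R) (hx : x ∈ NonUnitalSubring.closure X) :
    ∃ F : Set R, F.Finite ∧ (fun y => x * y) '' X ⊆ F + X := by
  obtain ⟨⟨h0, hneg⟩, F0, hF0fin, _, hF0⟩ := hX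
  induction hx using NonUnitalSubring.closure_induction with
  | mem a ha =>
    refine ⟨F0, hF0fin, ?_⟩
    rintro _ ⟨y, hy, rfl⟩
    exact hF0 (Set.mem_union_left _ (Set.mul_mem_mul ha hy))
  | zero =>
    refine ⟨{0}, Set.finite_singleton _, ?_⟩
    rintro _ ⟨y, hy, rfl⟩
    exact ⟨0, rfl, 0, h0, by simp⟩
  | add a b ha hb iha ihb =>
    obtain ⟨F1, hF1fin, hF1⟩ := iha
    obtain ⟨F2, hF2fin, hF2⟩ := ihb
    refine ⟨F1 + F2 + F0, (hF1fin.add hF2fin).add hF0fin, ?_⟩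
    rintro _ ⟨y, hy, rfl⟩
    obtain ⟨f1, hf1, u, hu, h1⟩ := hF1 ⟨y, hy, rfl⟩
    obtain ⟨f2, hf2, v, hv, h2⟩ := hF2 ⟨y, hy, rfl⟩
    obtain ⟨f0, hf0, w, hw, h3⟩ := hF0 (Set.mem_union_right _ (Set.add_mem_add hu hv))
    simp only at h1 h2 h3
    refine ⟨f1 + f2 + f0, Set.add_mem_add (Set.add_mem_add hf1 hf2) hf0, w, hw, ?_⟩
    show f1 + f2 + f0 + w = (a + b) * y
    rw [add_mul, ← h1, ← h2, add_assoc (f1 + f2), h3]; abel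
  | neg a ha iha =>
    obtain ⟨F1, hF1fin, hF1⟩ := iha
    refine ⟨F1, hF1fin, ?_⟩
    rintro _ ⟨y, hy, rfl⟩
    have hy' : -y ∈ X := by rw [← hneg, Set.mem_neg, neg_neg]; exact hy
    show -a * y ∈ F1 + X
    rw [neg_mul, ← mul_neg]
    exact hF1 ⟨-y, hy', rfl⟩
  | mul a b ha hb iha ihb =>
    obtain ⟨F1, hF1fin, hF1⟩ := iha
    obtain ⟨F2, hF2fin, hF2⟩ := ihb
    refine ⟨(fun f => a * f) '' F2 + F1, ((hF2fin.image _).add hF1fin), ?_⟩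
    rintro _ ⟨y, hy, rfl⟩
    obtain ⟨f2, hf2, u, hu, h2⟩ := hF2 ⟨y, hy, rfl⟩
    obtain ⟨f1, hf1, v, hv, h1⟩ := hF1 ⟨u, hu, rfl⟩
    simp only at h1 h2
    refine ⟨a * f2 + f1, Set.add_mem_add ⟨f2, hf2, rfl⟩ hf1, v, hv, ?_⟩
    show a * f2 + f1 + v = a * b * y
    rw [mul_assoc, ← h2, mul_add, ← h1]; abel
end

section
/- Let X be an approximate subring of a ring. Then for every m ≥ 1 there exists a finite subset F_m of ⟨X⟩ such that X^m ⊆ F_m + X, where X^m denotes the set of all products of m elements of X. -/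
open Pointwise

lemma cover_mul_left {R : Type*} [NonUnitalRing R] (X : Set R) (hX : IsApproxSubring X)
    {a : R} (ha : a ∈ NonUnitalSubring.closure X) :
    ∃ F : Set R, F.Finite ∧ F ⊆ (NonUnitalSubring.closure X : Set R) ∧
      ∀ x ∈ X, a * x ∈ F + X := by
  obtain ⟨⟨h0, hneg⟩, F₀, hF₀fin, hF₀sub, hF₀cov⟩ := hX
  induction ha using NonUnitalSubring.closure_induction with
  | mem b hb =>
    exact ⟨F₀, hF₀fin, hF₀sub, fun x hx => hF₀cov (Or.inl (Set.mul_mem_mul hb hx))⟩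
  | zero =>
    refine ⟨{0}, Set.finite_singleton 0, by simp [zero_mem], fun x hx => ?_⟩
    rw [zero_mul]
    exact ⟨0, rfl, 0, h0, by simp⟩
  | add b c hb hc ihb ihc =>
    obtain ⟨Fb, hFbfin, hFbsub, hFbcov⟩ := ihb
    obtain ⟨Fc, hFcfin, hFcsub, hFccov⟩ := ihc
    refine ⟨Fb + Fc + F₀, (hFbfin.add hFcfin).add hF₀fin, ?_, fun x hx => ?_⟩
    · rintro t ⟨u, ⟨f, hf, g, hg, rfl⟩, k, hk, rfl⟩
      exact add_mem (add_mem (hFbsub hf) (hFcsub hg)) (hF₀sub hk)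
    · obtain ⟨f, hf, y, hy, hfy⟩ := hFbcov x hx
      obtain ⟨g, hg, z, hz, hgz⟩ := hFccov x hx
      obtain ⟨k, hk, w, hw, hkw⟩ := hF₀cov (Or.inr (Set.add_mem_add hy hz))
      have hfy' : f + y = b * x := hfy
      have hgz' : g + z = c * x := hgz
      have hkw' : k + w = y + z := hkw
      refine ⟨f + g + k, ⟨f + g, ⟨f, hf, g, hg, rfl⟩, k, hk, rfl⟩, w, hw, ?_⟩
      show f + g + k + w = (b + c) * x
      rw [add_mul, ← hfy', ← hgz', add_assoc, hkw']; abel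
  | neg b hb ihb =>
    obtain ⟨Fb, hFbfin, hFbsub, hFbcov⟩ := ihb
    refine ⟨-Fb, hFbfin.neg, ?_, fun x hx => ?_⟩
    · intro t ht
      rw [Set.mem_neg] at ht
      simpa using neg_mem (hFbsub ht)
    · obtain ⟨f, hf, y, hy, hfy⟩ := hFbcov x hx
      refine ⟨-f, by simpa using hf, -y, ?_, ?_⟩
      · rw [← hneg]; simpa using hy
      · have hfy' : f + y = b * x := hfy
        show -f + -y = -b * x
        rw [neg_mul, ← hfy']; abel
  | mul b c hb hc ihb ihc =>
    obtain ⟨Fb, hFbfin, hFbsub, hFbcov⟩ := ihb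
    obtain ⟨Fc, hFcfin, hFcsub, hFccov⟩ := ihc
    refine ⟨{b} * Fc + Fb, ((Set.finite_singleton b).mul hFcfin).add hFbfin, ?_, fun x hx => ?_⟩
    · rintro t ⟨u, ⟨p, hp, q, hq, rfl⟩, g, hg, rfl⟩
      rw [Set.mem_singleton_iff] at hp; subst hp
      exact add_mem (mul_mem hb (hFcsub hq)) (hFbsub hg)
    · obtain ⟨f, hf, y, hy, hfy⟩ := hFccov x hx
      obtain ⟨g, hg, z, hz, hgz⟩ := hFbcov y hy
      have hfy' : f + y = c * x := hfy
      have hgz' : g + z = b * y := hgz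
      refine ⟨b * f + g, ⟨b * f, ⟨b, rfl, f, hf, rfl⟩, g, hg, rfl⟩, z, hz, ?_⟩
      show b * f + g + z = b * c * x
      rw [add_assoc, hgz', mul_assoc, ← hfy', mul_add]

/-- For an approximate subring `X` and every `m ≥ 1`, there is a finite subset `F`
of the subring generated by `X` such that `X^m ⊆ F + X`.
(Here `prodPow X m` is the set of products of `m+1` elements of `X`, so this covers
all powers `X^m` with `m ≥ 1`.) -/
theorem approx_subring_pow_covered
    {R : Type*} [NonUnitalRing R] (X : Set R) (hX : IsApproxSubring X) (m : ℕ) :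
    ∃ F : Set R, F.Finite ∧ F ⊆ (NonUnitalSubring.closure X : Set R) ∧
      prodPow X m ⊆ F + X := by
  have hcov : ∀ a : R, ∃ F : Set R, F.Finite ∧ F ⊆ (NonUnitalSubring.closure X : Set R) ∧
      (a ∈ NonUnitalSubring.closure X → ∀ x ∈ X, a * x ∈ F + X) := by
    intro a
    by_cases ha : a ∈ NonUnitalSubring.closure X
    · obtain ⟨F, h1, h2, h3⟩ := cover_mul_left X hX ha
      exact ⟨F, h1, h2, fun _ => h3⟩
    · exact ⟨{0}, Set.finite_singleton 0, by simp [zero_mem], fun h => absurd h ha⟩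
  choose cov hfin hsub hcv using hcov
  obtain ⟨⟨h0, hneg⟩, F₀, hF₀fin, hF₀sub, hF₀cov⟩ := hX
  induction m with
  | zero =>
    exact ⟨{0}, Set.finite_singleton 0, by simp [zero_mem],
      fun x hx => ⟨0, rfl, x, hx, zero_add x⟩⟩
  | succ n ih =>
    obtain ⟨F, hFfin, hFsub, hFcov⟩ := ih
    refine ⟨(⋃ f ∈ F, cov f) + F₀ + F₀,
      ((hFfin.biUnion fun f _ => hfin f).add hF₀fin).add hF₀fin, ?_, ?_⟩
    · rintro t ⟨u, ⟨v, hv, k, hk, rfl⟩, k', hk', rfl⟩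
      obtain ⟨f, hf, hv'⟩ := Set.mem_iUnion₂.mp hv
      exact add_mem (add_mem (hsub f hv') (hF₀sub hk)) (hF₀sub hk')
    · intro t ht
      obtain ⟨p, hp, x, hx, hpx⟩ := ht
      obtain ⟨f, hf, y, hy, hfy⟩ := hFcov hp
      have hfy' : f + y = p := hfy
      obtain ⟨h, hh, w, hw, hhw⟩ := hcv f (hFsub hf) x hx
      have hhw' : h + w = f * x := hhw
      obtain ⟨g, hg, z, hz, hgz⟩ := hF₀cov (Or.inl (Set.mul_mem_mul hy hx))
      have hgz' : g + z = y * x := hgz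
      obtain ⟨k, hk, u, hu, hku⟩ := hF₀cov (Or.inr (Set.add_mem_add hw hz))
      have hku' : k + u = w + z := hku
      refine ⟨h + g + k, ⟨h + g, ⟨h, Set.mem_biUnion hf hh, g, hg, rfl⟩, k, hk, rfl⟩, u, hu, ?_⟩
      have hpx' : p * x = t := hpx
      show h + g + k + u = t
      rw [← hpx', ← hfy', add_mul, ← hhw', ← hgz']
      rw [add_assoc (h + g), hku']; abel
end

section
/- Let X be an approximate subring of a ring. Then any additively symmetric subset Y of the subring ⟨X⟩ generated by X which is additively commensurable with X is itself an approximate subring. -/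
open Pointwise

/-- Two subsets of a ring are additively commensurable if each is covered by finitely
many additive translates of the other. -/
def AddCommensurable {R : Type*} [NonUnitalRing R] (Y Z : Set R) : Prop :=
  (∃ F : Set R, F.Finite ∧ Y ⊆ F + Z) ∧ (∃ F : Set R, F.Finite ∧ Z ⊆ F + Y)

section Aux

variable {R : Type*} [NonUnitalRing R]

lemma aux_add_subset {A B : Set R} {S : NonUnitalSubring R} (hA : A ⊆ S) (hB : B ⊆ S) :
    A + B ⊆ (S : Set R) := by
  intro c hc
  rw [Set.mem_add] at hc
  obtain ⟨a, ha, b, hb, rfl⟩ := hc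
  exact S.add_mem (hA ha) (hB hb)

lemma aux_mul_subset {A B : Set R} {S : NonUnitalSubring R} (hA : A ⊆ S) (hB : B ⊆ S) :
    A * B ⊆ (S : Set R) := by
  intro c hc
  rw [Set.mem_mul] at hc
  obtain ⟨a, ha, b, hb, rfl⟩ := hc
  exact S.mul_mem (hA ha) (hB hb)

/-- For `g` in the subring generated by an approximate subring `X`, the set `g • X`
is covered by finitely many additive translates of `X` with translators in the closure. -/
lemma aux_cover_left {X F : Set R} (h0 : (0 : R) ∈ X) (hneg : -X = X)
    (hFfin : F.Finite) (hFsub : F ⊆ (NonUnitalSubring.closure X : Set R))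
    (hcov : X * X ∪ (X + X) ⊆ F + X) :
    ∀ g ∈ NonUnitalSubring.closure X, ∃ A : Set R, A.Finite ∧
      A ⊆ (NonUnitalSubring.closure X : Set R) ∧ ∀ x ∈ X, g * x ∈ A + X := by
  intro g hg
  induction hg using NonUnitalSubring.closure_induction with
  | mem x hx =>
    exact ⟨F, hFfin, hFsub, fun t ht => hcov (Or.inl (Set.mul_mem_mul hx ht))⟩
  | zero =>
    refine ⟨{0}, Set.finite_singleton 0, ?_, fun t ht => ?_⟩
    · simpa using (NonUnitalSubring.closure X).zero_mem
    · have : (0 : R) * t = 0 + 0 := by simp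
      rw [this]
      exact Set.add_mem_add rfl h0
  | add g h hg' hh' ihg ihh =>
    obtain ⟨A, hAf, hAs, hA⟩ := ihg
    obtain ⟨B, hBf, hBs, hB⟩ := ihh
    refine ⟨A + B + F, (hAf.add hBf).add hFfin,
      aux_add_subset (aux_add_subset hAs hBs) hFsub, fun t ht => ?_⟩
    obtain ⟨a, ha, u, hu, hau⟩ := Set.mem_add.mp (hA t ht)
    obtain ⟨b, hb, v, hv, hbv⟩ := Set.mem_add.mp (hB t ht)
    obtain ⟨f, hf, w, hw, hfw⟩ := Set.mem_add.mp (hcov (Or.inr (Set.add_mem_add hu hv)))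
    have key : (g + h) * t = (a + b + f) + w := by
      rw [add_mul, ← hau, ← hbv]
      rw [show a + u + (b + v) = (a + b) + (u + v) by abel, ← hfw]
      abel
    rw [key]
    exact Set.add_mem_add (Set.add_mem_add (Set.add_mem_add ha hb) hf) hw
  | neg g hg' ihg =>
    obtain ⟨A, hAf, hAs, hA⟩ := ihg
    refine ⟨-A, hAf.neg, ?_, fun t ht => ?_⟩
    · intro a ha
      rw [Set.mem_neg] at ha
      simpa using (NonUnitalSubring.closure X).neg_mem (hAs ha)
    · obtain ⟨a, ha, u, hu, hau⟩ := Set.mem_add.mp (hA t ht)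
      have key : (-g) * t = (-a) + (-u) := by rw [neg_mul, ← hau]; abel
      rw [key]
      exact Set.add_mem_add (Set.neg_mem_neg.mpr ha) (by rw [← hneg]; exact Set.neg_mem_neg.mpr hu)
  | mul g h hg' hh' ihg ihh =>
    obtain ⟨A, hAf, hAs, hA⟩ := ihg
    obtain ⟨B, hBf, hBs, hB⟩ := ihh
    refine ⟨(g * ·) '' B + A, ((hBf.image _).add hAf), ?_, fun t ht => ?_⟩
    · refine aux_add_subset ?_ hAs
      rintro - ⟨b, hb, rfl⟩
      exact (NonUnitalSubring.closure X).mul_mem hg' (hBs hb)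
    · obtain ⟨b, hb, v, hv, hbv⟩ := Set.mem_add.mp (hB t ht)
      obtain ⟨a, ha, u, hu, hau⟩ := Set.mem_add.mp (hA v hv)
      have key : (g * h) * t = (g * b + a) + u := by
        rw [mul_assoc, ← hbv, mul_add, ← hau, add_assoc]
      rw [key]
      exact Set.add_mem_add (Set.add_mem_add ⟨b, hb, rfl⟩ ha) hu

/-- Right-multiplication version of `aux_cover_left`. -/
lemma aux_cover_right {X F : Set R} (h0 : (0 : R) ∈ X) (hneg : -X = X)
    (hFfin : F.Finite) (hFsub : F ⊆ (NonUnitalSubring.closure X : Set R))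
    (hcov : X * X ∪ (X + X) ⊆ F + X) :
    ∀ g ∈ NonUnitalSubring.closure X, ∃ A : Set R, A.Finite ∧
      A ⊆ (NonUnitalSubring.closure X : Set R) ∧ ∀ x ∈ X, x * g ∈ A + X := by
  intro g hg
  induction hg using NonUnitalSubring.closure_induction with
  | mem x hx =>
    exact ⟨F, hFfin, hFsub, fun t ht => hcov (Or.inl (Set.mul_mem_mul ht hx))⟩
  | zero =>
    refine ⟨{0}, Set.finite_singleton 0, ?_, fun t ht => ?_⟩
    · simpa using (NonUnitalSubring.closure X).zero_mem
    · have : t * (0 : R) = 0 + 0 := by simp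
      rw [this]
      exact Set.add_mem_add rfl h0
  | add g h hg' hh' ihg ihh =>
    obtain ⟨A, hAf, hAs, hA⟩ := ihg
    obtain ⟨B, hBf, hBs, hB⟩ := ihh
    refine ⟨A + B + F, (hAf.add hBf).add hFfin,
      aux_add_subset (aux_add_subset hAs hBs) hFsub, fun t ht => ?_⟩
    obtain ⟨a, ha, u, hu, hau⟩ := Set.mem_add.mp (hA t ht)
    obtain ⟨b, hb, v, hv, hbv⟩ := Set.mem_add.mp (hB t ht)
    obtain ⟨f, hf, w, hw, hfw⟩ := Set.mem_add.mp (hcov (Or.inr (Set.add_mem_add hu hv)))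
    have key : t * (g + h) = (a + b + f) + w := by
      rw [mul_add, ← hau, ← hbv]
      rw [show a + u + (b + v) = (a + b) + (u + v) by abel, ← hfw]
      abel
    rw [key]
    exact Set.add_mem_add (Set.add_mem_add (Set.add_mem_add ha hb) hf) hw
  | neg g hg' ihg =>
    obtain ⟨A, hAf, hAs, hA⟩ := ihg
    refine ⟨-A, hAf.neg, ?_, fun t ht => ?_⟩
    · intro a ha
      rw [Set.mem_neg] at ha
      simpa using (NonUnitalSubring.closure X).neg_mem (hAs ha)
    · obtain ⟨a, ha, u, hu, hau⟩ := Set.mem_add.mp (hA t ht)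
      have key : t * (-g) = (-a) + (-u) := by rw [mul_neg, ← hau]; abel
      rw [key]
      exact Set.add_mem_add (Set.neg_mem_neg.mpr ha) (by rw [← hneg]; exact Set.neg_mem_neg.mpr hu)
  | mul g h hg' hh' ihg ihh =>
    obtain ⟨A, hAf, hAs, hA⟩ := ihg
    obtain ⟨B, hBf, hBs, hB⟩ := ihh
    refine ⟨(· * h) '' A + B, ((hAf.image _).add hBf), ?_, fun t ht => ?_⟩
    · refine aux_add_subset ?_ hBs
      rintro - ⟨a, ha, rfl⟩
      exact (NonUnitalSubring.closure X).mul_mem (hAs ha) hh'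
    · obtain ⟨a, ha, u, hu, hau⟩ := Set.mem_add.mp (hA t ht)
      obtain ⟨b, hb, v, hv, hbv⟩ := Set.mem_add.mp (hB u hu)
      have key : t * (g * h) = (a * h + b) + v := by
        rw [← mul_assoc, ← hau, add_mul, ← hbv, add_assoc]
      rw [key]
      exact Set.add_mem_add (Set.add_mem_add ⟨a, ha, rfl⟩ hb) hv

/-- Uniform version of `aux_cover_left` over a finite set of multipliers. -/
lemma aux_cover_left_finite {X F : Set R} (h0 : (0 : R) ∈ X) (hneg : -X = X)
    (hFfin : F.Finite) (hFsub : F ⊆ (NonUnitalSubring.closure X : Set R))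
    (hcov : X * X ∪ (X + X) ⊆ F + X) {G : Set R} (hGfin : G.Finite)
    (hGsub : G ⊆ (NonUnitalSubring.closure X : Set R)) :
    ∃ B : Set R, B.Finite ∧ B ⊆ (NonUnitalSubring.closure X : Set R) ∧
      ∀ g ∈ G, ∀ x ∈ X, g * x ∈ B + X := by
  have h := fun g (hg : g ∈ G) => aux_cover_left h0 hneg hFfin hFsub hcov g (hGsub hg)
  choose! A h1 h2 h3 using h
  refine ⟨⋃ g ∈ G, A g, hGfin.biUnion h1, Set.iUnion₂_subset h2, fun g hg x hx => ?_⟩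
  exact Set.add_subset_add_right (Set.subset_biUnion_of_mem hg) (h3 g hg x hx)

lemma aux_cover_right_finite {X F : Set R} (h0 : (0 : R) ∈ X) (hneg : -X = X)
    (hFfin : F.Finite) (hFsub : F ⊆ (NonUnitalSubring.closure X : Set R))
    (hcov : X * X ∪ (X + X) ⊆ F + X) {G : Set R} (hGfin : G.Finite)
    (hGsub : G ⊆ (NonUnitalSubring.closure X : Set R)) :
    ∃ B : Set R, B.Finite ∧ B ⊆ (NonUnitalSubring.closure X : Set R) ∧
      ∀ g ∈ G, ∀ x ∈ X, x * g ∈ B + X := by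
  have h := fun g (hg : g ∈ G) => aux_cover_right h0 hneg hFfin hFsub hcov g (hGsub hg)
  choose! A h1 h2 h3 using h
  refine ⟨⋃ g ∈ G, A g, hGfin.biUnion h1, Set.iUnion₂_subset h2, fun g hg x hx => ?_⟩
  exact Set.add_subset_add_right (Set.subset_biUnion_of_mem hg) (h3 g hg x hx)

/-- A covering `Z ⊆ G + W` between two subsets of a subring can be refined so that
the translators lie in that subring. -/
lemma aux_refine {Z W G : Set R} {S : NonUnitalSubring R} (hZ : Z ⊆ S) (hW : W ⊆ S)
    (hG : G.Finite) (hZG : Z ⊆ G + W) :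
    ∃ G' : Set R, G'.Finite ∧ G' ⊆ (S : Set R) ∧ Z ⊆ G' + W := by
  refine ⟨{g ∈ G | ∃ w ∈ W, g + w ∈ Z}, hG.subset (Set.sep_subset _ _), ?_, ?_⟩
  · rintro g ⟨hg, w, hw, hgw⟩
    have : g = (g + w) - w := by abel
    rw [this]
    exact S.sub_mem (hZ hgw) (hW hw)
  · intro z hz
    obtain ⟨g, hg, w, hw, hgw⟩ := Set.mem_add.mp (hZG hz)
    exact Set.mem_add.mpr ⟨g, ⟨hg, w, hw, by rw [hgw]; exact hz⟩, w, hw, hgw⟩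

end Aux

/-- If `X` is an approximate subring, then any additively symmetric subset `Y` of the
subring generated by `X` which is additively commensurable with `X` is itself an
approximate subring. -/
theorem approx_subring_of_commensurable
    {R : Type*} [NonUnitalRing R] (X Y : Set R) (hX : IsApproxSubring X)
    (hYsub : Y ⊆ (NonUnitalSubring.closure X : Set R)) (hYsym : AddSymmetric Y)
    (hcom : AddCommensurable Y X) :
    IsApproxSubring Y := by
  obtain ⟨⟨h0X, hnegX⟩, F, hFfin, hFsub, hFcov⟩ := hX
  have hXsub : X ⊆ (NonUnitalSubring.closure X : Set R) := NonUnitalSubring.subset_closure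
  -- refine the two coverings so that the translators lie in the closure
  obtain ⟨G, hGfin0, hYG0⟩ := hcom.1
  obtain ⟨F₁, hF₁fin, hF₁sub, hF₁⟩ := aux_refine hYsub hXsub hGfin0 hYG0
  obtain ⟨H, hHfin0, hXH0⟩ := hcom.2
  obtain ⟨F₂, hF₂fin, hF₂sub, hF₂⟩ := aux_refine hXsub hYsub hHfin0 hXH0
  -- uniform covers for products with elements of F₁
  obtain ⟨B₁, hB₁fin, hB₁sub, hB₁⟩ :=
    aux_cover_left_finite h0X hnegX hFfin hFsub hFcov hF₁fin hF₁sub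
  obtain ⟨B₂, hB₂fin, hB₂sub, hB₂⟩ :=
    aux_cover_right_finite h0X hnegX hFfin hFsub hFcov hF₁fin hF₁sub
  have hXX : X * X ⊆ F + X := fun c hc => hFcov (Or.inl hc)
  have hXA : X + X ⊆ F + X := fun c hc => hFcov (Or.inr hc)
  set E₁ : Set R := F₁ + F₁ + F + F₂ with hE₁
  set E₂ : Set R := F₁ * F₁ + B₁ + B₂ + F + F + F + F₂ with hE₂
  have hEfin : (E₂ ∪ E₁).Finite :=
    (((((((hF₁fin.mul hF₁fin).add hB₁fin).add hB₂fin).add hFfin).add hFfin).add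
      hFfin).add hF₂fin).union (((hF₁fin.add hF₁fin).add hFfin).add hF₂fin)
  have hZsub : Y * Y ∪ (Y + Y) ⊆ (NonUnitalSubring.closure Y : Set R) :=
    Set.union_subset
      (aux_mul_subset NonUnitalSubring.subset_closure NonUnitalSubring.subset_closure)
      (aux_add_subset NonUnitalSubring.subset_closure NonUnitalSubring.subset_closure)
  have hmain : Y * Y ∪ (Y + Y) ⊆ (E₂ ∪ E₁) + Y := by
    rintro c (hc | hc)
    · -- multiplicative part
      obtain ⟨y₁, hy₁, y₂, hy₂, rfl⟩ := Set.mem_mul.mp hc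
      obtain ⟨f₁, hf₁, x₁, hx₁, h₁⟩ := Set.mem_add.mp (hF₁ hy₁)
      obtain ⟨f₂, hf₂, x₂, hx₂, h₂⟩ := Set.mem_add.mp (hF₁ hy₂)
      obtain ⟨a₁, ha₁, u₁, hu₁, e₁⟩ := Set.mem_add.mp (hB₁ f₁ hf₁ x₂ hx₂)
      obtain ⟨a₂, ha₂, u₂, hu₂, e₂⟩ := Set.mem_add.mp (hB₂ f₂ hf₂ x₁ hx₁)
      obtain ⟨f₃, hf₃, u₃, hu₃, e₃⟩ := Set.mem_add.mp (hXX (Set.mul_mem_mul hx₁ hx₂))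
      obtain ⟨f₄, hf₄, u₄, hu₄, e₄⟩ := Set.mem_add.mp (hXA (Set.add_mem_add hu₁ hu₂))
      obtain ⟨f₅, hf₅, u₅, hu₅, e₅⟩ := Set.mem_add.mp (hXA (Set.add_mem_add hu₄ hu₃))
      obtain ⟨f₆, hf₆, y, hy, e₆⟩ := Set.mem_add.mp (hF₂ hu₅)
      have key : y₁ * y₂ = (f₁ * f₂ + a₁ + a₂ + f₃ + f₄ + f₅ + f₆) + y := by
        calc y₁ * y₂ = (f₁ + x₁) * (f₂ + x₂) := by rw [h₁, h₂]
          _ = f₁ * f₂ + (a₁ + u₁) + ((a₂ + u₂) + (f₃ + u₃)) := by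
              rw [e₁, e₂, e₃, add_mul, mul_add, mul_add]
          _ = (f₁ * f₂ + a₁ + a₂ + f₃) + ((u₁ + u₂) + u₃) := by abel
          _ = (f₁ * f₂ + a₁ + a₂ + f₃) + ((f₄ + u₄) + u₃) := by rw [← e₄]
          _ = (f₁ * f₂ + a₁ + a₂ + f₃ + f₄) + (u₄ + u₃) := by abel
          _ = (f₁ * f₂ + a₁ + a₂ + f₃ + f₄) + (f₅ + u₅) := by rw [← e₅]
          _ = (f₁ * f₂ + a₁ + a₂ + f₃ + f₄ + f₅) + u₅ := by abel
          _ = (f₁ * f₂ + a₁ + a₂ + f₃ + f₄ + f₅) + (f₆ + y) := by rw [← e₆]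
          _ = (f₁ * f₂ + a₁ + a₂ + f₃ + f₄ + f₅ + f₆) + y := by abel
      rw [key]
      refine Set.add_mem_add (Or.inl ?_) hy
      exact Set.add_mem_add (Set.add_mem_add (Set.add_mem_add (Set.add_mem_add (Set.add_mem_add
        (Set.add_mem_add (Set.mul_mem_mul hf₁ hf₂) ha₁) ha₂) hf₃) hf₄) hf₅) hf₆
    · -- additive part
      obtain ⟨y₁, hy₁, y₂, hy₂, rfl⟩ := Set.mem_add.mp hc
      obtain ⟨f₁, hf₁, x₁, hx₁, h₁⟩ := Set.mem_add.mp (hF₁ hy₁)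
      obtain ⟨f₂, hf₂, x₂, hx₂, h₂⟩ := Set.mem_add.mp (hF₁ hy₂)
      obtain ⟨f₃, hf₃, x₃, hx₃, e₃⟩ := Set.mem_add.mp (hXA (Set.add_mem_add hx₁ hx₂))
      obtain ⟨f₄, hf₄, y, hy, e₄⟩ := Set.mem_add.mp (hF₂ hx₃)
      have key : y₁ + y₂ = (f₁ + f₂ + f₃ + f₄) + y := by
        calc y₁ + y₂ = (f₁ + f₂) + (x₁ + x₂) := by rw [← h₁, ← h₂]; abel
          _ = (f₁ + f₂) + (f₃ + x₃) := by rw [← e₃]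
          _ = (f₁ + f₂ + f₃) + x₃ := by abel
          _ = (f₁ + f₂ + f₃) + (f₄ + y) := by rw [← e₄]
          _ = (f₁ + f₂ + f₃ + f₄) + y := by abel
      rw [key]
      exact Set.add_mem_add (Or.inr (Set.add_mem_add (Set.add_mem_add
        (Set.add_mem_add hf₁ hf₂) hf₃) hf₄)) hy
  obtain ⟨E', hE'fin, hE'sub, hE'⟩ :=
    aux_refine hZsub NonUnitalSubring.subset_closure hEfin hmain
  exact ⟨hYsym, E', hE'fin, hE'sub, hE'⟩
end

section
/- Let K ⊆ L be a proper field extension with K an infinite field, and let t ∈ L \ K. Then the set Y := (t + K) ∪ {0} ∪ (−t + K) is additively symmetric and additively commensurable with K, but Y is not an approximate subring of L. -/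
open Pointwise

/-- If `K ⊆ L` is a proper field extension with `K` infinite and `t ∈ L \ K`, then
`Y := (t + K) ∪ {0} ∪ (-t + K)` is additively symmetric and additively commensurable
with `K`, but is not an approximate subring of `L`. -/
theorem not_approx_subring_of_translate_union
    {L : Type*} [Field L] (K : Subfield L) [Infinite K] (t : L) (ht : t ∉ K)
    (Y : Set L) (hY : Y = ({t} + (K : Set L)) ∪ {0} ∪ ({-t} + (K : Set L))) :
    AddSymmetric Y ∧ AddCommensurable Y (K : Set L) ∧ ¬ IsApproxSubring Y := by
  have h0K : (0:L) ∈ (K:Set L) := K.zero_mem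
  have ht0 : t ≠ 0 := fun h => ht (by rw [h]; exact K.zero_mem)
  have memY : ∀ x : L, x ∈ Y ↔ (x - t ∈ K ∨ x = 0 ∨ x + t ∈ K) := by
    intro x
    rw [hY]
    simp only [Set.mem_union, Set.mem_singleton_iff, Set.mem_add]
    constructor
    · rintro ((⟨a, ha, b, hb, rfl⟩ | h) | ⟨a, ha, b, hb, rfl⟩)
      · subst ha; left; simpa using hb
      · right; left; exact h
      · subst ha; right; right; simpa using hb
    · rintro (h | h | h)
      · exact Or.inl (Or.inl ⟨t, rfl, x - t, h, by ring⟩)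
      · exact Or.inl (Or.inr h)
      · exact Or.inr ⟨-t, rfl, x + t, h, by ring⟩
  have swap : ∀ x : L, (x - t ∈ K ∨ x = 0 ∨ x + t ∈ K) →
      ((-x) - t ∈ K ∨ -x = 0 ∨ (-x) + t ∈ K) := by
    rintro x (h | h | h)
    · right; right
      have := K.neg_mem h
      convert this using 1; ring
    · right; left; simp [h]
    · left
      have := K.neg_mem h
      convert this using 1; ring
  refine ⟨⟨(memY 0).2 (Or.inr (Or.inl rfl)), ?_⟩, ⟨?_, ?_⟩, ?_⟩
  · -- -Y = Y
    ext x
    rw [Set.mem_neg, memY, memY]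
    constructor
    · intro h
      have := swap _ h
      simpa using this
    · intro h
      exact swap _ h
  · -- Y ⊆ {t,0,-t} + K
    refine ⟨{t, 0, -t}, ((Set.finite_singleton (-t)).insert 0).insert t, ?_⟩
    intro x hx
    rcases (memY x).1 hx with h | h | h
    · exact ⟨t, by simp, x - t, h, by ring⟩
    · exact ⟨0, by simp, 0, h0K, by simp [h]⟩
    · exact ⟨-t, by simp, x + t, h, by ring⟩
  · -- K ⊆ {-t} + Y
    refine ⟨{-t}, Set.finite_singleton _, ?_⟩
    intro k hk
    exact ⟨-t, rfl, t + k, (memY _).2 (Or.inl (by simpa using hk)), by ring⟩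
  · rintro ⟨-, F, hFfin, -, hFsub⟩
    set S : Set L := (fun k => t*t + t*k) '' (K:Set L) with hS
    have hKinf : (K:Set L).Infinite := by
      rw [← Set.infinite_coe_iff]
      exact inferInstanceAs (Infinite K)
    have hSinf : S.Infinite := by
      refine hKinf.image ?_
      intro a _ b _ hab
      have : t * a = t * b := by
        have := hab
        simpa using this
      exact mul_left_cancel₀ ht0 this
    set F' : Set L := ({t} + F) ∪ F ∪ ({-t} + F) with hF'
    have hF'fin : F'.Finite :=
      (((hFfin.add (Set.finite_singleton t)).union hFfin).union
        (hFfin.add (Set.finite_singleton (-t)))).subset (by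
          intro x hx
          rcases hx with (hx | hx) | hx
          · left; left
            rcases hx with ⟨a, ha, b, hb, rfl⟩
            exact ⟨b, hb, a, ha, by exact add_comm b a⟩
          · left; right; exact hx
          · right
            rcases hx with ⟨a, ha, b, hb, rfl⟩
            exact ⟨b, hb, a, ha, by exact add_comm b a⟩)
    have cover : S ⊆ ⋃ f ∈ F', S ∩ ({f} + (K:Set L)) := by
      rintro s hs
      have hsFY : s ∈ F + Y := by
        apply hFsub
        left
        rcases hs with ⟨k, hk, rfl⟩
        have h1 : t + k ∈ Y := (memY _).2 (Or.inl (by simpa using hk))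
        have h2 : t ∈ Y := (memY _).2 (Or.inl (by simpa using h0K))
        have := Set.mul_mem_mul h1 h2
        convert this using 1
        ring
      rcases hsFY with ⟨f, hf, y, hy, rfl⟩
      rcases (memY y).1 hy with h | h | h
      · refine Set.mem_biUnion (show f + t ∈ F' from Or.inl (Or.inl ⟨t, rfl, f, hf, by exact add_comm t f⟩)) ?_
        exact ⟨hs, f + t, rfl, y - t, h, by ring⟩
      · refine Set.mem_biUnion (show f ∈ F' from Or.inl (Or.inr hf)) ?_
        exact ⟨hs, f, rfl, 0, h0K, by simp [h]⟩
      · refine Set.mem_biUnion (show f - t ∈ F' from Or.inr ⟨-t, rfl, f, hf, by ring⟩) ?_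
        exact ⟨hs, f - t, rfl, y + t, h, by ring⟩
    have hsub : ∀ f : L, (S ∩ ({f} + (K:Set L))).Subsingleton := by
      intro f a ha b hb
      obtain ⟨⟨k1, hk1, hak⟩, f1, hf1, c1, hc1, hac⟩ := ha
      obtain ⟨⟨k2, hk2, hbk⟩, f2, hf2, c2, hc2, hbc⟩ := hb
      simp only [Set.mem_singleton_iff] at hf1 hf2
      subst hf1; subst hf2
      simp only at hak hbk hac hbc
      by_cases hkk : k1 = k2
      · rw [← hak, ← hbk, hkk]
      · exfalso
        apply ht
        have hd : t * (k1 - k2) = c1 - c2 := by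
          have h1 : t*t + t*k1 = f2 + c1 := by rw [hak, ← hac]
          have h2 : t*t + t*k2 = f2 + c2 := by rw [hbk, ← hbc]
          linear_combination h1 - h2
        have hk12 : k1 - k2 ∈ K := K.sub_mem hk1 hk2
        have hne : k1 - k2 ≠ 0 := sub_ne_zero.2 hkk
        have : t = (c1 - c2) * (k1 - k2)⁻¹ := by
          field_simp
          linear_combination hd
        rw [this]
        exact K.mul_mem (K.sub_mem hc1 hc2) (K.inv_mem hk12)
    have hSfin : S.Finite :=
      (hF'fin.biUnion (fun f _ => (hsub f).finite)).subset cover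
    exact hSinf hSfin
end

section
/- Let X be an approximate subgroup of a group, G := ⟨X⟩ the subgroup it generates, and let f : G → S be a locally compact model of X, i.e. a group homomorphism to a locally compact Hausdorff topological group S such that f[X] has compact closure in S and there exist a neighborhood V of the identity in S and m ∈ ℕ with f⁻¹[V] ⊆ X^m. Then for every neighborhood U of the identity in S, the set f⁻¹[U] is generic, i.e. finitely many left translates of f⁻¹[U] cover X. -/
open Pointwise

/-- A subset of a group is symmetric if it contains the identity and `X⁻¹ = X`. -/
def SymmetricSubset {G : Type*} [Group G] (X : Set G) : Prop :=
  (1 : G) ∈ X ∧ X⁻¹ = X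

/-- `X` is an approximate subgroup if it is symmetric and `X·X ⊆ F·X` for some finite
subset `F` of the subgroup generated by `X`. -/
def IsApproxSubgroup {G : Type*} [Group G] (X : Set G) : Prop :=
  SymmetricSubset X ∧ ∃ F : Set G, F.Finite ∧ F ⊆ (Subgroup.closure X : Set G) ∧
    X * X ⊆ F * X

/-- Let `X` be an approximate subgroup generating the group `G`, and let `f : G →* S`
be a locally compact model of `X`. Then for every neighborhood `U` of the identity
in `S`, the set `f⁻¹[U]` is generic: finitely many left translates of it cover `X`. -/
theorem locally_compact_model_preimage_generic
    {G S : Type*} [Group G] [Group S] [TopologicalSpace S] [IsTopologicalGroup S]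
    [LocallyCompactSpace S] [T2Space S]
    (X : Set G) (hX : IsApproxSubgroup X) (hgen : Subgroup.closure X = ⊤)
    (f : G →* S) (hcomp : IsCompact (closure (⇑f '' X)))
    (hmodel : ∃ V ∈ nhds (1 : S), ∃ m : ℕ, ⇑f ⁻¹' V ⊆ X ^ m)
    (U : Set S) (hU : U ∈ nhds (1 : S)) :
    ∃ F : Set G, F.Finite ∧ X ⊆ F * (⇑f ⁻¹' U) := by
  classical
  obtain ⟨V, hV, hVsplit⟩ := exists_nhds_split_inv hU
  set W : Set S := V ∩ V⁻¹ with hW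
  have hWnhds : W ∈ nhds (1 : S) := Filter.inter_mem hV (inv_mem_nhds_one S hV)
  have hWU : ∀ v ∈ W, ∀ w ∈ W, w⁻¹ * v ∈ U := by
    intro v hv w hw
    have := hVsplit w⁻¹ hw.2 v⁻¹ hv.2
    simpa [div_eq_mul_inv] using this
  -- cover the compact closure by translates of W
  have hnhds : ∀ s ∈ closure (⇑f '' X), s • W ∈ nhds s := by
    intro s _
    simpa using smul_mem_nhds_smul s hWnhds
  obtain ⟨t, htK, htcov⟩ := hcomp.elim_nhds_subcover (fun s => s • W) hnhds
  -- pick a point of f '' X in each translate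
  have hpick : ∀ s ∈ t, ∃ g : G, g ∈ X ∧ f g ∈ s • W := by
    intro s hs
    have hsK : s ∈ closure (⇑f '' X) := htK s hs
    rcases mem_closure_iff_nhds.1 hsK (s • W) (hnhds s hsK) with ⟨y, hyW, hyX⟩
    rcases hyX with ⟨g, hgX, rfl⟩
    exact ⟨g, hgX, hyW⟩
  choose g hgX hgW using hpick
  refine ⟨(t.attach.image (fun s => g s.1 s.2) : Finset G), Finset.finite_toSet _, ?_⟩
  intro x hx
  have hfx : f x ∈ closure (⇑f '' X) := subset_closure ⟨x, hx, rfl⟩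
  obtain ⟨s, hst, hfxs⟩ := Set.mem_iUnion₂.1 (htcov hfx)
  obtain ⟨v, hv, hveq⟩ := hfxs
  obtain ⟨w, hw, hweq⟩ := hgW s hst
  refine ⟨g s hst, ?_, (g s hst)⁻¹ * x, ?_, by group⟩
  · exact Finset.mem_coe.2 (Finset.mem_image.2 ⟨⟨s, hst⟩, Finset.mem_attach _ _, rfl⟩)
  · show f ((g s hst)⁻¹ * x) ∈ U
    have : f ((g s hst)⁻¹ * x) = w⁻¹ * v := by
      rw [map_mul, map_inv, ← hweq, ← hveq]
      simp only [smul_eq_mul]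
      group
    rw [this]
    exact hWU v hv w hw
end

section
/- Let X be an approximate subgroup of a group, G := ⟨X⟩ the subgroup it generates, and let f : G → S be a locally compact model of X. Then for every neighborhood U of the identity in S whose closure is compact, the set f⁻¹[U] is commensurable with X, i.e. finitely many left translates of f⁻¹[U] cover X and finitely many left translates of X cover f⁻¹[U]. -/
open Pointwise

private lemma setFinitePow' {G : Type*} [Monoid G] {F : Set G} (hF : F.Finite) (m : ℕ) :
    (F ^ m).Finite := by
  induction m with
  | zero => simp
  | succ n ih => rw [pow_succ]; exact ih.mul hF

private lemma powSubset' {G : Type*} [Group G] {X F : Set G} (h1 : (1:G) ∈ X)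
    (h : X * X ⊆ F * X) : ∀ m, X ^ m ⊆ F ^ m * X := by
  intro m
  induction m with
  | zero => simpa using Set.singleton_subset_iff.2 h1
  | succ n ih =>
      calc X ^ (n+1) = X ^ n * X := pow_succ X n
        _ ⊆ (F ^ n * X) * X := Set.mul_subset_mul_right ih
        _ = F ^ n * (X * X) := by rw [mul_assoc]
        _ ⊆ F ^ n * (F * X) := Set.mul_subset_mul_left h
        _ = F ^ (n+1) * X := by rw [← mul_assoc, ← pow_succ]

/-- A symmetric open neighborhood of `1` inside a given neighborhood. -/
private lemma symmNhd {S : Type*} [Group S] [TopologicalSpace S] [IsTopologicalGroup S]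
    {U : Set S} (hU : U ∈ nhds (1 : S)) :
    ∃ W : Set S, IsOpen W ∧ (1:S) ∈ W ∧ (∀ w ∈ W, w⁻¹ ∈ W) ∧ W ⊆ U := by
  refine ⟨interior U ∩ (interior U)⁻¹, isOpen_interior.inter isOpen_interior.inv,
    ⟨mem_interior_iff_mem_nhds.2 hU, by simpa using mem_interior_iff_mem_nhds.2 hU⟩,
    fun w hw => ⟨hw.2, by simpa using hw.1⟩, fun x hx => interior_subset hx.1⟩

/-- Let `X` be an approximate subgroup generating the group `G`, and let `f : G →* S`
be a locally compact model of `X`. Then for every neighborhood `U` of the identity in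
`S` with compact closure, `f⁻¹[U]` is commensurable with `X`: finitely many left
translates of `f⁻¹[U]` cover `X` and finitely many left translates of `X` cover
`f⁻¹[U]`. -/
theorem locally_compact_model_preimage_commensurable
    {G S : Type*} [Group G] [Group S] [TopologicalSpace S] [IsTopologicalGroup S]
    [LocallyCompactSpace S] [T2Space S]
    (X : Set G) (hX : IsApproxSubgroup X) (hgen : Subgroup.closure X = ⊤)
    (f : G →* S) (hcomp : IsCompact (closure (⇑f '' X)))
    (hmodel : ∃ V ∈ nhds (1 : S), ∃ m : ℕ, ⇑f ⁻¹' V ⊆ X ^ m)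
    (U : Set S) (hU : U ∈ nhds (1 : S)) (hUc : IsCompact (closure U)) :
    (∃ F : Set G, F.Finite ∧ X ⊆ F * (⇑f ⁻¹' U)) ∧
      (∃ F : Set G, F.Finite ∧ ⇑f ⁻¹' U ⊆ F * X) := by
  constructor
  · -- finitely many translates of f⁻¹U cover X
    obtain ⟨W, hWo, hW1, hWsymm, hWU⟩ := symmNhd hU
    have hcover : closure (⇑f '' X) ⊆ ⋃ x ∈ X, f x • W := by
      intro t ht
      have hnhd : t • W ∈ nhds t := by
        refine (hWo.smul t).mem_nhds ?_
        exact ⟨1, hW1, mul_one t⟩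
      obtain ⟨s, hsW, hsX⟩ := mem_closure_iff_nhds.1 ht _ hnhd
      obtain ⟨x, hxX, rfl⟩ := hsX
      obtain ⟨w, hw, hwt⟩ := hsW
      refine Set.mem_biUnion hxX ?_
      refine ⟨w⁻¹, hWsymm w hw, ?_⟩
      simp only [smul_eq_mul] at hwt ⊢
      rw [← hwt, mul_assoc, mul_inv_cancel, mul_one]
    obtain ⟨F, hFX, hFfin, hsub⟩ := hcomp.elim_finite_subcover_image
      (fun x _ => hWo.smul (f x)) hcover
    refine ⟨F, hFfin, fun x hx => ?_⟩
    have : f x ∈ ⋃ g ∈ F, f g • W := hsub (subset_closure ⟨x, hx, rfl⟩)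
    obtain ⟨g, hgF, w, hw, hwe⟩ := Set.mem_iUnion₂.1 this
    refine ⟨g, hgF, g⁻¹ * x, ?_, by group⟩
    have : f (g⁻¹ * x) = w := by
      simp only [smul_eq_mul] at hwe
      rw [map_mul, map_inv, ← hwe, ← mul_assoc, inv_mul_cancel, one_mul]
    exact Set.mem_preimage.2 (this ▸ hWU hw)
  · -- finitely many translates of X cover f⁻¹U
    obtain ⟨V, hV, m, hVX⟩ := hmodel
    obtain ⟨W₀, hW₀, hsplit⟩ := exists_nhds_one_split hV
    obtain ⟨W, hWo, hW1, hWsymm, hWW₀⟩ := symmNhd hW₀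
    have hcover : closure U ⊆ ⋃ t ∈ closure U, t • W := fun t ht =>
      Set.mem_biUnion ht ⟨1, hW1, mul_one t⟩
    obtain ⟨T, hTU, hTfin, hTsub⟩ := hUc.elim_finite_subcover_image
      (fun t _ => hWo.smul t) hcover
    classical
    let pick : S → G := fun t => if h : ∃ g : G, f g ∈ t • W then h.choose else 1
    obtain ⟨h1X, _⟩ := hX.1
    obtain ⟨F₀, hF₀fin, _, hF₀⟩ := hX.2
    refine ⟨(pick '' T) * F₀ ^ m, (hTfin.image pick).mul (setFinitePow' hF₀fin m), ?_⟩
    intro u hu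
    have : f u ∈ ⋃ t ∈ T, t • W := hTsub (subset_closure hu)
    obtain ⟨t, htT, w₁, hw₁, hw₁e⟩ := Set.mem_iUnion₂.1 this
    have hex : ∃ g : G, f g ∈ t • W := ⟨u, w₁, hw₁, hw₁e⟩
    obtain ⟨w₂, hw₂, hw₂e⟩ : f (pick t) ∈ t • W := by
      simpa only [pick, dif_pos hex] using hex.choose_spec
    set g := pick t with hg
    have hmem : f (g⁻¹ * u) ∈ V := by
      have : f (g⁻¹ * u) = w₂⁻¹ * w₁ := by
        simp only [smul_eq_mul] at hw₁e hw₂e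
        rw [map_mul, map_inv, ← hw₁e, ← hw₂e]
        group
      rw [this]
      exact hsplit _ (hWW₀ (hWsymm _ hw₂)) _ (hWW₀ hw₁)
    have : g⁻¹ * u ∈ F₀ ^ m * X := powSubset' h1X hF₀ m (hVX hmem)
    obtain ⟨a, ha, b, hb, hab⟩ := this
    refine ⟨g * a, ⟨g, ⟨t, htT, rfl⟩, a, ha, rfl⟩, b, hb, ?_⟩
    simp only at hab ⊢
    rw [mul_assoc, hab]
    group
end

section
/- Let X be a symmetric subset of a group (not assumed to be an approximate subgroup), and suppose there exists a group homomorphism f : ⟨X⟩ → S to a locally compact Hausdorff topological group S such that f[X] has compact closure in S and there exist a neighborhood U of the identity in S and m ∈ ℕ with f⁻¹[U] ⊆ X^m. Then X^m is an approximate subgroup for some m; in fact, for the m in the hypothesis, X^{2m} is covered by finitely many left translates of X^m. -/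
open Pointwise

private lemma isCompact_pow' {S : Type*} [Monoid S] [TopologicalSpace S]
    [ContinuousMul S] {K : Set S} (hK : IsCompact K) : ∀ n : ℕ, n ≠ 0 → IsCompact (K ^ n)
  | 1, _ => by simpa using hK
  | (n + 2), _ => by
    rw [pow_succ]
    exact (isCompact_pow' hK (n + 1) n.succ_ne_zero).mul hK

/-- Let `X` be a symmetric subset of a group `G` generated by `X` (not assumed to be an
approximate subgroup), and suppose there is a homomorphism `f : G →* S` to a locally
compact Hausdorff group such that `f[X]` has compact closure and `f⁻¹[U] ⊆ X^m` for
some neighborhood `U` of the identity and some `m`. Then `X^m` is an approximate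
subgroup; in fact `X^{2m}` is covered by finitely many left translates of `X^m`. -/
theorem pow_approx_subgroup_of_locally_compact_model
    {G S : Type*} [Group G] [Group S] [TopologicalSpace S] [IsTopologicalGroup S]
    [LocallyCompactSpace S] [T2Space S]
    (X : Set G) (hsym : SymmetricSubset X) (hgen : Subgroup.closure X = ⊤)
    (f : G →* S) (hcomp : IsCompact (closure (⇑f '' X)))
    (U : Set S) (hU : U ∈ nhds (1 : S)) (m : ℕ) (hm : ⇑f ⁻¹' U ⊆ X ^ m) :
    IsApproxSubgroup (X ^ m) ∧ ∃ F : Set G, F.Finite ∧ X ^ (2 * m) ⊆ F * X ^ m := by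
  classical
  obtain ⟨h1, hinv⟩ := hsym
  -- X^m contains 1 and is symmetric
  have h1m : (1 : G) ∈ X ^ m := Set.one_mem_pow h1
  have hsymm : (X ^ m)⁻¹ = X ^ m := by rw [← inv_pow, hinv]
  -- handle m = 0 separately
  rcases eq_or_ne m 0 with rfl | hm0
  · refine ⟨⟨⟨h1m, hsymm⟩, {1}, Set.finite_singleton 1, ?_, ?_⟩, {1}, Set.finite_singleton 1, ?_⟩
    · intro x hx
      rw [Set.mem_singleton_iff] at hx
      subst hx
      exact Subgroup.one_mem _
    · simp only [pow_zero, one_mul, mul_one, Set.singleton_one, subset_refl]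
    · simp only [Nat.mul_zero, pow_zero, mul_one, Set.singleton_one, subset_refl]
  have hgenm : ∀ F : Set G, F ⊆ (Subgroup.closure (X ^ m) : Set G) := by
    have : Subgroup.closure (X ^ m) = ⊤ := by
      rw [eq_top_iff, ← hgen]
      exact Subgroup.closure_mono (Set.subset_pow h1 hm0)
    intro F x _
    rw [this]; trivial
  -- choose a symmetric open neighborhood W of 1 with W * W ⊆ U
  obtain ⟨V, hVopen, hV1, hVU⟩ := exists_open_nhds_one_mul_subset hU
  set W : Set S := V ∩ V⁻¹ with hWdef
  have hWopen : IsOpen W := hVopen.inter (hVopen.inv)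
  have hW1 : (1 : S) ∈ W := ⟨hV1, by simpa using hV1⟩
  have hWinv : W⁻¹ = W := by
    rw [hWdef, Set.inter_inv, inv_inv, Set.inter_comm]
  have hWU : W * W ⊆ U := fun x hx => hVU (Set.mul_subset_mul Set.inter_subset_left
    (Set.inter_subset_left) hx)
  -- the compact set covering the image of X^(2m)
  set K : Set S := closure (⇑f '' X) with hKdef
  have hK2 : IsCompact (K ^ (2 * m)) := isCompact_pow' hcomp (2 * m) (by omega)
  have himg : ⇑f '' (X ^ (2 * m)) ⊆ K ^ (2 * m) := by
    rw [Set.image_pow]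
    exact Set.pow_subset_pow_left subset_closure
  -- cover K^(2m) by translates c • W
  obtain ⟨T, hT⟩ := hK2.elim_nhds_subcover (fun c => c • W)
    (fun c _ => by
      have : c • W ∈ nhds c := by
        refine (hWopen.smul c).mem_nhds ?_
        exact ⟨1, hW1, mul_one c⟩
      exact this)
  -- choose a preimage point for each relevant translate
  have key : ∀ t : S, (∃ x ∈ X ^ (2 * m), f x ∈ t • W) → ∃ x, x ∈ X ^ (2 * m) ∧ f x ∈ t • W :=
    fun t h => by obtain ⟨x, hx, hfx⟩ := h; exact ⟨x, hx, hfx⟩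
  let g : S → G := fun t =>
    if h : ∃ x ∈ X ^ (2 * m), f x ∈ t • W then (key t h).choose else 1
  set F : Set G := g '' (T : Set S) with hFdef
  have hFfin : F.Finite := T.finite_toSet.image g
  -- the covering property
  have hcover : X ^ (2 * m) ⊆ F * X ^ m := by
    intro x hx
    have hfx : f x ∈ ⋃ t ∈ T, t • W := hT.2 (himg ⟨x, hx, rfl⟩)
    simp only [Set.mem_iUnion] at hfx
    obtain ⟨t, htT, hfxt⟩ := hfx
    have hex : ∃ x ∈ X ^ (2 * m), f x ∈ t • W := ⟨x, hx, hfxt⟩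
    have hgt : g t ∈ X ^ (2 * m) ∧ f (g t) ∈ t • W := by
      simp only [g, dif_pos hex]
      exact ⟨(key t hex).choose_spec.1, (key t hex).choose_spec.2⟩
    -- (g t)⁻¹ * x maps into W⁻¹ * W ⊆ U
    have hmem : f ((g t)⁻¹ * x) ∈ U := by
      obtain ⟨w1, hw1, he1⟩ := hgt.2
      obtain ⟨w2, hw2, he2⟩ := hfxt
      have : f ((g t)⁻¹ * x) = w1⁻¹ * w2 := by
        rw [map_mul, map_inv, ← he1, ← he2]
        simp only [smul_eq_mul]
        group
      rw [this]
      exact hWU ⟨w1⁻¹, by rw [← hWinv]; exact Set.inv_mem_inv.mpr hw1, w2, hw2, rfl⟩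
    have hxm : (g t)⁻¹ * x ∈ X ^ m := hm hmem
    exact ⟨g t, ⟨t, htT, rfl⟩, (g t)⁻¹ * x, hxm, by group⟩
  refine ⟨⟨⟨h1m, hsymm⟩, F, hFfin, hgenm F, ?_⟩, F, hFfin, hcover⟩
  · intro x hx
    have : x ∈ X ^ (2 * m) := by
      rw [two_mul, pow_add]
      exact hx
    exact hcover this
end

section
/- Let S be a (not necessarily unital or commutative) topological ring and let V be a compact open subgroup of the additive group of S. Then there exists a subring P of S with P ⊆ V such that P is open and compact in S. -/
open Pointwise

private lemma isOpen_mul_stab {S : Type*} [NonUnitalRing S] [TopologicalSpace S]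
    [IsTopologicalRing S] (V : AddSubgroup S) (hVc : IsCompact (V : Set S))
    (hVo : IsOpen (V : Set S)) :
    IsOpen {x : S | ∀ v ∈ V, x * v ∈ V ∧ v * x ∈ V} := by
  rw [isOpen_iff_forall_mem_open]
  intro x hx
  have hcm : Continuous fun p : S × S => p.1 * p.2 := continuous_mul
  have h1 : ({x} : Set S) ×ˢ (V : Set S) ⊆ (fun p : S × S => p.1 * p.2) ⁻¹' V := by
    rintro ⟨a, b⟩ ⟨ha, hb⟩
    simp only [Set.mem_singleton_iff] at ha
    exact ha ▸ (hx b hb).1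
  have h2 : ({x} : Set S) ×ˢ (V : Set S) ⊆ (fun p : S × S => p.2 * p.1) ⁻¹' V := by
    rintro ⟨a, b⟩ ⟨ha, hb⟩
    simp only [Set.mem_singleton_iff] at ha
    exact ha ▸ (hx b hb).2
  obtain ⟨u₁, w₁, hu₁, -, hxu₁, hVw₁, hsub₁⟩ :=
    generalized_tube_lemma isCompact_singleton hVc (hVo.preimage hcm) h1
  obtain ⟨u₂, w₂, hu₂, -, hxu₂, hVw₂, hsub₂⟩ :=
    generalized_tube_lemma isCompact_singleton hVc
      (hVo.preimage (continuous_mul.comp continuous_swap)) h2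
  refine ⟨u₁ ∩ u₂, ?_, hu₁.inter hu₂, hxu₁ rfl, hxu₂ rfl⟩
  rintro y ⟨hy₁, hy₂⟩ v hv
  constructor
  · exact hsub₁ (Set.mk_mem_prod hy₁ (hVw₁ hv))
  · have := hsub₂ (Set.mk_mem_prod hy₂ (hVw₂ hv))
    simpa using this

/-- In a (not necessarily unital or commutative) topological ring, every compact open
additive subgroup `V` contains an open, compact subring. -/
theorem exists_compact_open_subring_of_compact_open_addSubgroup
    {S : Type*} [NonUnitalRing S] [TopologicalSpace S] [IsTopologicalRing S]
    (V : AddSubgroup S) (hVc : IsCompact (V : Set S)) (hVo : IsOpen (V : Set S)) :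
    ∃ P : NonUnitalSubring S, (P : Set S) ⊆ (V : Set S) ∧
      IsOpen (P : Set S) ∧ IsCompact (P : Set S) := by
  set T : Set S := {x : S | ∀ v ∈ V, x * v ∈ V ∧ v * x ∈ V} with hT
  refine ⟨{ carrier := (V : Set S) ∩ T
            zero_mem' := ⟨V.zero_mem, fun v hv => by simp [V.zero_mem]⟩
            add_mem' := ?_
            neg_mem' := ?_
            mul_mem' := ?_ }, Set.inter_subset_left, ?_, ?_⟩
  · intro a b ha hb
    obtain ⟨haV, haT⟩ := ha
    obtain ⟨hbV, hbT⟩ := hb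
    refine ⟨V.add_mem haV hbV, fun v hv => ?_⟩
    rw [add_mul, mul_add]
    exact ⟨V.add_mem (haT v hv).1 (hbT v hv).1, V.add_mem (haT v hv).2 (hbT v hv).2⟩
  · intro a b ha hb
    obtain ⟨haV, haT⟩ := ha
    obtain ⟨hbV, hbT⟩ := hb
    refine ⟨(haT b hbV).1, fun v hv => ?_⟩
    rw [mul_assoc]
    constructor
    · exact (haT _ (hbT v hv).1).1
    · rw [← mul_assoc]
      exact (hbT _ (haT v hv).2).2
  · intro a ha
    obtain ⟨haV, haT⟩ := ha
    refine ⟨V.neg_mem haV, fun v hv => ?_⟩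
    rw [neg_mul, mul_neg]
    exact ⟨V.neg_mem (haT v hv).1, V.neg_mem (haT v hv).2⟩
  · exact hVo.inter (isOpen_mul_stab V hVc hVo)
  · have hVcl : IsClosed (V : Set S) := V.isClosed_of_isOpen hVo
    have hTcl : IsClosed T := by
      have : T = ⋂ v ∈ (V : Set S), ((· * v) ⁻¹' V ∩ (v * ·) ⁻¹' V) := by
        ext x; simp [hT, Set.mem_iInter, forall_and]
      rw [this]
      exact isClosed_biInter fun v _ =>
        (hVcl.preimage (continuous_mul_right v)).inter (hVcl.preimage (continuous_mul_left v))
    exact hVc.inter_right hTcl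
end

section
/- Let X be a K-approximate subring of a ring, witnessed by a set F ⊆ ⟨X⟩ with |F| ≤ K and X·X ∪ (X+X) ⊆ F + X. Then the set 4X + X·4X is covered by at most K^11 additive translates of X, i.e. there exists F' with |F'| ≤ K^11 and 4X + X·4X ⊆ F' + X. -/
open Pointwise

/-- If `X` is a `K`-approximate subring witnessed by `F` (`|F| ≤ K`,
`X·X ∪ (X+X) ⊆ F + X`), then `4X + X·4X` is covered by at most `K^11` additive
translates of `X`. -/
theorem four_X_covered_by_K_pow_eleven
    {R : Type*} [NonUnitalRing R] (X : Set R) (hsym : AddSymmetric X)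
    (K : ℕ) (F : Finset R) (hFsub : (F : Set R) ⊆ (NonUnitalSubring.closure X : Set R))
    (hFcard : F.card ≤ K) (hF : X * X ∪ (X + X) ⊆ (F : Set R) + X) :
    ∃ F' : Finset R, F'.card ≤ K ^ 11 ∧
      (X + X + X + X) + X * (X + X + X + X) ⊆ (F' : Set R) + X := by
  classical
  set S : Set R := (F : Set R) with hS
  have hAdd : X + X ⊆ S + X := (Set.union_subset_iff.mp hF).2
  have hMul : X * X ⊆ S + X := (Set.union_subset_iff.mp hF).1
  -- key step: absorbing one more X
  have step : ∀ (T : Finset R) (A : Set R), A ⊆ (T : Set R) + X →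
      A + X ⊆ ((T + F : Finset R) : Set R) + X := by
    intro T A hA
    calc A + X ⊆ ((T : Set R) + X) + X := Set.add_subset_add_right hA
      _ = (T : Set R) + (X + X) := add_assoc _ _ _
      _ ⊆ (T : Set R) + (S + X) := Set.add_subset_add_left hAdd
      _ = ((T : Set R) + S) + X := (add_assoc _ _ _).symm
      _ = ((T + F : Finset R) : Set R) + X := by rw [Finset.coe_add]
  -- combining two covered sets
  have combine : ∀ (T U : Finset R) (A B : Set R), A ⊆ (T : Set R) + X →
      B ⊆ (U : Set R) + X →
      A + B ⊆ ((T + U + F : Finset R) : Set R) + X := by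
    intro T U A B hA hB
    calc A + B ⊆ ((T : Set R) + X) + ((U : Set R) + X) :=
          Set.add_subset_add hA hB
      _ = ((T : Set R) + (U : Set R)) + (X + X) := by
          rw [add_assoc, add_assoc, add_comm X, add_assoc]
      _ ⊆ ((T : Set R) + (U : Set R)) + (S + X) := Set.add_subset_add_left hAdd
      _ = (((T : Set R) + (U : Set R)) + S) + X := (add_assoc _ _ _).symm
      _ = ((T + U + F : Finset R) : Set R) + X := by rw [Finset.coe_add, Finset.coe_add]
  have h2X : X + X ⊆ (F : Set R) + X := hAdd
  have h3X : X + X + X ⊆ ((F + F : Finset R) : Set R) + X := step F _ h2X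
  have h4X : X + X + X + X ⊆ ((F + F + F : Finset R) : Set R) + X := step _ _ h3X
  -- X * 4X
  have hdistrib : X * (X + X + X + X) ⊆ X * X + X * X + X * X + X * X := by
    calc X * (X + X + X + X) ⊆ X * (X + X + X) + X * X := (Set.mul_add_subset _ _ _)
      _ ⊆ (X * (X + X) + X * X) + X * X :=
          Set.add_subset_add_right (Set.mul_add_subset _ _ _)
      _ ⊆ ((X * X + X * X) + X * X) + X * X :=
          Set.add_subset_add_right (Set.add_subset_add_right (Set.mul_add_subset _ _ _))
  have hXX2 : X * X + X * X ⊆ ((F + F + F : Finset R) : Set R) + X :=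
    combine F F _ _ hMul hMul
  have hXX3 : X * X + X * X + X * X ⊆ ((F + F + F + F + F : Finset R) : Set R) + X :=
    combine (F + F + F) F _ _ hXX2 hMul
  have hXX4 : X * X + X * X + X * X + X * X ⊆
      ((F + F + F + F + F + F + F : Finset R) : Set R) + X :=
    combine (F + F + F + F + F) F _ _ hXX3 hMul
  have hX4X : X * (X + X + X + X) ⊆
      ((F + F + F + F + F + F + F : Finset R) : Set R) + X :=
    hdistrib.trans hXX4
  refine ⟨F + F + F + (F + F + F + F + F + F + F) + F, ?_, ?_⟩
  · have key : ∀ (T : Finset R) (n : ℕ), T.card ≤ K ^ n → (T + F).card ≤ K ^ (n + 1) := by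
      intro T n h
      refine Finset.card_add_le.trans ?_
      rw [pow_succ]
      exact Nat.mul_le_mul h hFcard
    have h1 : F.card ≤ K ^ 1 := by simpa using hFcard
    have h2 := key _ 1 h1
    have h3 := key _ 2 h2
    have h4 := key _ 3 h3
    have h5 := key _ 4 h4
    have h6 := key _ 5 h5
    have h7 := key _ 6 h6
    have h8 := key _ 7 h7
    have h9 := key _ 8 h8
    have h10 := key _ 9 h9
    have h11 := key _ 10 h10
    calc (F + F + F + (F + F + F + F + F + F + F) + F).card
        = (F + F + F + F + F + F + F + F + F + F + F).card := by
          congr 1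
          simp only [add_assoc]
      _ ≤ K ^ 11 := h11
  · exact combine (F + F + F) (F + F + F + F + F + F + F) _ _ h4X hX4X
end

section
/- Let R' be a (not necessarily unital or commutative) ring, let Y be a finite additively symmetric subset of R' which is not a subring, and let c ∈ R' satisfy c·(Y·Y + (Y + Y)) ⊆ Y. Then there exists z ≠ 0 with c·z = 0; in particular, c is zero or a left zero divisor. -/
open Pointwise

/-- A subset of a ring is a subring if it contains `0` and is closed under addition,
negation, and multiplication. -/
def IsSubringSet {R : Type*} [NonUnitalRing R] (Y : Set R) : Prop :=
  (0 : R) ∈ Y ∧ (∀ a ∈ Y, ∀ b ∈ Y, a + b ∈ Y) ∧ (∀ a ∈ Y, -a ∈ Y) ∧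
    ∀ a ∈ Y, ∀ b ∈ Y, a * b ∈ Y

/-- If `Y` is a finite additively symmetric subset of a ring which is not a subring,
and `c·(Y·Y + (Y+Y)) ⊆ Y`, then `c` kills some nonzero element; in particular `c` is
zero or a left zero divisor. -/
theorem left_zero_divisor_of_absorbing
    {R : Type*} [NonUnitalRing R] (Y : Set R) (hfin : Y.Finite)
    (hsym : AddSymmetric Y) (hnot : ¬ IsSubringSet Y)
    (c : R) (hc : ∀ z ∈ Y * Y + (Y + Y), c * z ∈ Y) :
    ∃ z : R, z ≠ 0 ∧ c * z = 0 := by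
  by_contra h
  push_neg at h
  obtain ⟨h0, hneg⟩ := hsym
  -- left multiplication by c is injective
  have hinj : Function.Injective (fun z : R => c * z) := by
    intro x y hxy
    simp only at hxy
    by_contra hne
    have : x - y ≠ 0 := sub_ne_zero.mpr hne
    exact (h _ this) (by rw [mul_sub, hxy, sub_self])
  have key : ∀ a ∈ Y, ∀ b ∈ Y, ∀ d ∈ Y, ∀ e ∈ Y, c * (a * b + (d + e)) ∈ Y :=
    fun a ha b hb d hd e he =>
      hc _ (Set.add_mem_add (Set.mul_mem_mul ha hb) (Set.add_mem_add hd he))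
  have hmaps : Set.MapsTo (fun z : R => c * z) Y Y := by
    intro y hy
    have := key 0 h0 0 h0 y hy 0 h0
    simpa using this
  have hbij : Set.BijOn (fun z : R => c * z) Y Y :=
    (hfin.injOn_iff_bijOn_of_mapsTo hmaps).mp hinj.injOn
  have hsurj : ∀ a ∈ Y, ∃ a' ∈ Y, c * a' = a := by
    intro a ha
    obtain ⟨a', ha', heq⟩ := hbij.surjOn ha
    exact ⟨a', ha', heq⟩
  apply hnot
  refine ⟨h0, ?_, ?_, ?_⟩
  · intro a ha b hb
    obtain ⟨a', ha', rfl⟩ := hsurj a ha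
    obtain ⟨b', hb', rfl⟩ := hsurj b hb
    have := key 0 h0 0 h0 a' ha' b' hb'
    simpa [mul_add] using this
  · intro a ha
    rw [← hneg]
    exact Set.neg_mem_neg.mpr ha
  · intro a ha b hb
    obtain ⟨a', ha', rfl⟩ := hsurj a ha
    have := key a' ha' b hb 0 h0 0 h0
    simpa [mul_assoc] using this
end
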